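/- arXiv:2411.15846 — 6 statements merged into one kernel-verified Lean document; each statement's English description precedes it below -/
import Mathlib

section
/- Let x : ℝ → ℝⁿ be a twice differentiable curve with x(t) ≠ 0 for all t which solves the Kepler problem ẍ(t) = −x(t)/|x(t)|³. Then for every index i = 1, …, n, the component of the Laplace–Runge–Lenz vector A_i(t) = x_i(t) |ẋ(t)|² − ẋ_i(t) ⟨x(t), ẋ(t)⟩ − x_i(t)/|x(t)| is constant in t, where ⟨·,·⟩ is the Euclidean inner product. -/
/-- **Conservation of the Laplace–Runge–Lenz vector for the Kepler problem.**
If `x : ℝ → ℝⁿ` is twice differentiable, never zero, and solves the Kepler problem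
`ẍ = −x/|x|³`, then for every index `i` the LRL component
`A_i(t) = x_i(t) |ẋ(t)|² − ẋ_i(t) ⟨x(t), ẋ(t)⟩ − x_i(t)/|x(t)|` is constant in `t`. -/
theorem kepler_LRL_conserved (n : ℕ) (x : ℝ → EuclideanSpace ℝ (Fin n))
    (hx1 : ∀ t, DifferentiableAt ℝ x t)
    (hx2 : ∀ t, DifferentiableAt ℝ (deriv x) t)
    (hx0 : ∀ t, x t ≠ 0)
    (hkep : ∀ t, deriv (deriv x) t = -((‖x t‖ ^ 3)⁻¹ • x t)) :
    ∀ (i : Fin n), ∀ t s : ℝ,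
      x t i * ‖deriv x t‖ ^ 2 - deriv x t i * (inner ℝ (x t) (deriv x t) : ℝ)
        - x t i / ‖x t‖ =
      x s i * ‖deriv x s‖ ^ 2 - deriv x s i * (inner ℝ (x s) (deriv x s) : ℝ)
        - x s i / ‖x s‖ := by
  intro i t s
  have hvd : ∀ u, HasDerivAt x (deriv x u) u := fun u => (hx1 u).hasDerivAt
  have had : ∀ u, HasDerivAt (deriv x) (-((‖x u‖ ^ 3)⁻¹ • x u)) u := fun u => by
    have := (hx2 u).hasDerivAt
    rwa [hkep u] at this
  have key : ∀ u, HasDerivAt (fun w => x w i * ‖deriv x w‖ ^ 2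
      - deriv x w i * (inner ℝ (x w) (deriv x w) : ℝ) - x w i / ‖x w‖) 0 u := by
    intro u
    have hr : ‖x u‖ ≠ 0 := norm_ne_zero_iff.mpr (hx0 u)
    have hrpos : (0 : ℝ) < ‖x u‖ := norm_pos_iff.mpr (hx0 u)
    set X := x u with hXdef
    set V := deriv x u with hVdef
    set A : EuclideanSpace ℝ (Fin n) := -((‖X‖ ^ 3)⁻¹ • X) with hAdef
    have hX : HasDerivAt x V u := hvd u
    have hA : HasDerivAt (deriv x) A u := had u
    -- components
    have h1 : HasDerivAt (fun w => x w i) (V i) u := by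
      exact ((EuclideanSpace.proj (𝕜 := ℝ) i).hasFDerivAt.comp_hasDerivAt u hX)
    have h1' : HasDerivAt (fun w => deriv x w i) (A i) u := by
      exact ((EuclideanSpace.proj (𝕜 := ℝ) i).hasFDerivAt.comp_hasDerivAt u hA)
    -- norm squared of velocity
    have h2 : HasDerivAt (fun w => ‖deriv x w‖ ^ 2)
        ((inner ℝ V A : ℝ) + (inner ℝ A V : ℝ)) u := by
      have := hA.inner ℝ hA
      simpa only [real_inner_self_eq_norm_sq] using this
    -- inner ℝ product
    have h3 : HasDerivAt (fun w => (inner ℝ (x w) (deriv x w) : ℝ))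
        ((inner ℝ X A : ℝ) + (inner ℝ V V : ℝ)) u := hX.inner ℝ hA
    -- norm
    have hq : HasDerivAt (fun w => (inner ℝ (x w) (x w) : ℝ))
        ((inner ℝ X V : ℝ) + (inner ℝ V X : ℝ)) u := hX.inner ℝ hX
    have hqne : (inner ℝ X X : ℝ) ≠ 0 := by
      rw [real_inner_self_eq_norm_sq]; positivity
    have h4 : HasDerivAt (fun w => ‖x w‖)
        (1 / (2 * ‖X‖) * ((inner ℝ X V : ℝ) + (inner ℝ V X : ℝ))) u := by
      have hsq := (Real.hasDerivAt_sqrt hqne).comp u hq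
      have hfun : (fun w => Real.sqrt (inner ℝ (x w) (x w) : ℝ)) = fun w => ‖x w‖ := by
        funext w
        rw [real_inner_self_eq_norm_sq, Real.sqrt_sq (norm_nonneg _)]
      rw [Function.comp_def] at hsq
      rw [hfun] at hsq
      have hXn : Real.sqrt (inner ℝ X X : ℝ) = ‖X‖ := by
        rw [real_inner_self_eq_norm_sq, Real.sqrt_sq (norm_nonneg _)]
      rw [hXn] at hsq
      exact hsq
    -- assemble
    have hall := ((h1.mul h2).sub (h1'.mul h3)).sub ((h1.div h4 hr))
    convert hall using 1
    case e'_4 => rfl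
    case e'_5 => rfl
    case e'_8 => rfl
    have hAi : A i = -((‖X‖ ^ 3)⁻¹ * X i) := by
      simp [hAdef, PiLp.smul_apply, smul_eq_mul]
    have hIXA : (inner ℝ X A : ℝ) = -((‖X‖ ^ 3)⁻¹ * (inner ℝ X X : ℝ)) := by
      simp [hAdef, inner_neg_right, inner_smul_right]
    have hIVA : (inner ℝ V A : ℝ) = -((‖X‖ ^ 3)⁻¹ * (inner ℝ X V : ℝ)) := by
      simp [hAdef, inner_neg_right, inner_smul_right, real_inner_comm V X]
    have hIAV : (inner ℝ A V : ℝ) = -((‖X‖ ^ 3)⁻¹ * (inner ℝ X V : ℝ)) := by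
      simp [hAdef, inner_neg_left, inner_smul_left]
    have hIVX : (inner ℝ V X : ℝ) = (inner ℝ X V : ℝ) := real_inner_comm X V
    have hXX : (inner ℝ X X : ℝ) = ‖X‖ ^ 2 := real_inner_self_eq_norm_sq X
    have hVV : (inner ℝ V V : ℝ) = ‖V‖ ^ 2 := real_inner_self_eq_norm_sq V
    rw [← hXdef, ← hVdef]
    rw [hAi, hIXA, hIVA, hIAV, hIVX, hXX, hVV]
    field_simp
    ring
  have hdiff : Differentiable ℝ (fun w => x w i * ‖deriv x w‖ ^ 2
      - deriv x w i * (inner ℝ (x w) (deriv x w) : ℝ) - x w i / ‖x w‖) :=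
    fun u => (key u).differentiableAt
  have hzero : ∀ u, deriv (fun w => x w i * ‖deriv x w‖ ^ 2
      - deriv x w i * (inner ℝ (x w) (deriv x w) : ℝ) - x w i / ‖x w‖) u = 0 :=
    fun u => (key u).deriv
  exact is_const_of_deriv_eq_zero hdiff hzero t s
end

section
/- Let x : ℝ → ℝⁿ be a twice differentiable curve with x(t) ≠ 0 for all t which solves the Kepler problem ẍ(t) = −x(t)/|x(t)|³. Let A₀ ∈ ℝⁿ be the (conserved) Laplace–Runge–Lenz vector with components (A₀)_i = x_i(0) |ẋ(0)|² − ẋ_i(0) ⟨x(0), ẋ(0)⟩ − x_i(0)/|x(0)|, and let L₀ = |x(0)|² |ẋ(0)|² − ⟨x(0), ẋ(0)⟩². Then for all t, |x(t)| + ⟨A₀, x(t)⟩ = L₀; that is, the orbit lies on the conic section |x| = L₀ − ⟨A₀, x⟩ (Kepler's first law in implicit form). -/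
private lemma kepler_norm_hasDerivAt (n : ℕ) (x : ℝ → EuclideanSpace ℝ (Fin n)) (t : ℝ)
    (hx1 : ∀ t, DifferentiableAt ℝ x t) (hx0 : ∀ t, x t ≠ 0) :
    HasDerivAt (fun s => ‖x s‖) ((inner ℝ (x t) (deriv x t) : ℝ) / ‖x t‖) t := by
  have hX := (hx1 t).hasDerivAt
  have h1 := hX.inner ℝ hX
  rw [real_inner_comm (deriv x t) (x t), ← two_mul] at h1
  have hns : (inner ℝ (x t) (x t) : ℝ) = ‖x t‖ ^ 2 := real_inner_self_eq_norm_sq _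
  have hrne : ‖x t‖ ≠ 0 := norm_ne_zero_iff.2 (hx0 t)
  have hne : (inner ℝ (x t) (x t) : ℝ) ≠ 0 := by rw [hns]; positivity
  have h2 := (Real.hasDerivAt_sqrt hne).comp t h1
  simp only [Function.comp_def] at h2
  have heq : (fun s => Real.sqrt (inner ℝ (x s) (x s) : ℝ)) = fun s => ‖x s‖ := by
    funext s
    rw [real_inner_self_eq_norm_sq, Real.sqrt_sq (norm_nonneg _)]
  rw [heq] at h2
  convert h2 using 1
  · rfl
  · rfl
  rw [real_inner_comm (deriv x t) (x t), hns, Real.sqrt_sq (norm_nonneg _)]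
  field_simp



/-- **Kepler's first law, implicit conic-section form.**
If `x : ℝ → ℝⁿ` solves the Kepler problem `ẍ = −x/|x|³`, with `A₀` the (conserved)
Laplace–Runge–Lenz vector at time `0` and `L₀ = |x(0)|²|ẋ(0)|² − ⟨x(0), ẋ(0)⟩²`, then
for all `t`, `|x(t)| + ⟨A₀, x(t)⟩ = L₀`. -/
theorem kepler_first_law (n : ℕ) (x : ℝ → EuclideanSpace ℝ (Fin n))
    (hx1 : ∀ t, DifferentiableAt ℝ x t)
    (hx2 : ∀ t, DifferentiableAt ℝ (deriv x) t)
    (hx0 : ∀ t, x t ≠ 0)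
    (hkep : ∀ t, deriv (deriv x) t = -((‖x t‖ ^ 3)⁻¹ • x t))
    (A₀ : EuclideanSpace ℝ (Fin n))
    (hA₀ : ∀ i, A₀ i = x 0 i * ‖deriv x 0‖ ^ 2
        - deriv x 0 i * (inner ℝ (x 0) (deriv x 0) : ℝ) - x 0 i / ‖x 0‖)
    (L₀ : ℝ)
    (hL₀ : L₀ = ‖x 0‖ ^ 2 * ‖deriv x 0‖ ^ 2 - (inner ℝ (x 0) (deriv x 0) : ℝ) ^ 2) :
    ∀ t : ℝ, ‖x t‖ + (inner ℝ A₀ (x t) : ℝ) = L₀ := by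
  have hrne : ∀ t, ‖x t‖ ≠ 0 := fun t => norm_ne_zero_iff.2 (hx0 t)
  have hX : ∀ t, HasDerivAt x (deriv x t) t := fun t => (hx1 t).hasDerivAt
  have hV : ∀ t, HasDerivAt (deriv x) (-((‖x t‖ ^ 3)⁻¹ • x t)) t := fun t => by
    have := (hx2 t).hasDerivAt
    rwa [hkep t] at this
  -- inner products with the acceleration
  have ha_x : ∀ t, (inner ℝ (x t) (-((‖x t‖ ^ 3)⁻¹ • x t)) : ℝ)
      = -((‖x t‖ ^ 3)⁻¹ * ‖x t‖ ^ 2) := fun t => by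
    rw [inner_neg_right, real_inner_smul_right, real_inner_self_eq_norm_sq]
  have ha_v : ∀ t, (inner ℝ (deriv x t) (-((‖x t‖ ^ 3)⁻¹ • x t)) : ℝ)
      = -((‖x t‖ ^ 3)⁻¹ * (inner ℝ (x t) (deriv x t) : ℝ)) := fun t => by
    rw [inner_neg_right, real_inner_smul_right, real_inner_comm]
  have ha_v' : ∀ t, (inner ℝ (-((‖x t‖ ^ 3)⁻¹ • x t)) (deriv x t) : ℝ)
      = -((‖x t‖ ^ 3)⁻¹ * (inner ℝ (x t) (deriv x t) : ℝ)) := fun t => by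
    rw [real_inner_comm]; exact ha_v t
  have ha_i : ∀ t i, (-((‖x t‖ ^ 3)⁻¹ • x t)) i = -((‖x t‖ ^ 3)⁻¹ * x t i) := fun t i => by
    simp
  -- derivatives of the scalar building blocks
  have hQ : ∀ t, HasDerivAt (fun s => (inner ℝ (x s) (deriv x s) : ℝ))
      (-((‖x t‖ ^ 3)⁻¹ * ‖x t‖ ^ 2) + (inner ℝ (deriv x t) (deriv x t) : ℝ)) t := fun t => by
    have := (hX t).inner ℝ (hV t)
    rwa [ha_x t] at this
  have hW : ∀ t, HasDerivAt (fun s => (inner ℝ (deriv x s) (deriv x s) : ℝ))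
      (-((‖x t‖ ^ 3)⁻¹ * (inner ℝ (x t) (deriv x t) : ℝ))
        + -((‖x t‖ ^ 3)⁻¹ * (inner ℝ (x t) (deriv x t) : ℝ))) t := fun t => by
    have := (hV t).inner ℝ (hV t)
    rwa [ha_v t, ha_v' t] at this
  have hP : ∀ t, HasDerivAt (fun s => (inner ℝ (x s) (x s) : ℝ))
      (2 * (inner ℝ (x t) (deriv x t) : ℝ)) t := fun t => by
    have h := (hX t).inner ℝ (hX t)
    have h2 : (inner ℝ (x t) (deriv x t) : ℝ) + (inner ℝ (deriv x t) (x t) : ℝ)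
        = 2 * (inner ℝ (x t) (deriv x t) : ℝ) := by
      rw [real_inner_comm (deriv x t) (x t)]; ring
    rwa [h2] at h
  have hRinv : ∀ t, HasDerivAt (fun s => (‖x s‖)⁻¹)
      (-((inner ℝ (x t) (deriv x t) : ℝ) / ‖x t‖) / ‖x t‖ ^ 2) t := fun t =>
    (kepler_norm_hasDerivAt n x t hx1 hx0).inv (hrne t)
  have hXi : ∀ t (i : Fin n), HasDerivAt (fun s => x s i) (deriv x t i) t := fun t i => by
    have h : HasDerivAt (fun s => x s i) (deriv x t i) t := by
      exact (EuclideanSpace.proj i).hasFDerivAt.comp_hasDerivAt t (hX t)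
    exact h
  have hVi : ∀ t (i : Fin n), HasDerivAt (fun s => deriv x s i)
      (-((‖x t‖ ^ 3)⁻¹ * x t i)) t := fun t i => by
    have h : HasDerivAt (fun s => deriv x s i) ((-((‖x t‖ ^ 3)⁻¹ • x t)) i) t := by
      exact (EuclideanSpace.proj i).hasFDerivAt.comp_hasDerivAt t (hV t)
    rwa [ha_i t i] at h
  -- conservation of LRL components
  have hAcons : ∀ (i : Fin n) (t : ℝ),
      x t i * (inner ℝ (deriv x t) (deriv x t) : ℝ)
        - deriv x t i * (inner ℝ (x t) (deriv x t) : ℝ) - x t i * (‖x t‖)⁻¹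
      = x 0 i * (inner ℝ (deriv x 0) (deriv x 0) : ℝ)
        - deriv x 0 i * (inner ℝ (x 0) (deriv x 0) : ℝ) - x 0 i * (‖x 0‖)⁻¹ := by
    intro i t
    have hF : ∀ u : ℝ, HasDerivAt (fun s =>
        x s i * (inner ℝ (deriv x s) (deriv x s) : ℝ)
          - deriv x s i * (inner ℝ (x s) (deriv x s) : ℝ) - x s i * (‖x s‖)⁻¹) 0 u := by
      intro u
      have h := (((hXi u i).mul (hW u)).sub ((hVi u i).mul (hQ u))).sub
        ((hXi u i).mul (hRinv u))
      convert h using 1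
      · rfl
      · rfl
      · rfl
      set r := ‖x u‖ with hrdef
      set q : ℝ := inner ℝ (x u) (deriv x u) with hqdef
      set w : ℝ := inner ℝ (deriv x u) (deriv x u) with hwdef
      have hr : r ≠ 0 := hrne u
      field_simp
      ring
    exact is_const_of_deriv_eq_zero (fun u => (hF u).differentiableAt)
      (fun u => (hF u).deriv) t 0
  -- conservation of the angular momentum squared
  have hLcons : ∀ t : ℝ,
      (inner ℝ (x t) (x t) : ℝ) * (inner ℝ (deriv x t) (deriv x t) : ℝ)
        - (inner ℝ (x t) (deriv x t) : ℝ) * (inner ℝ (x t) (deriv x t) : ℝ)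
      = (inner ℝ (x 0) (x 0) : ℝ) * (inner ℝ (deriv x 0) (deriv x 0) : ℝ)
        - (inner ℝ (x 0) (deriv x 0) : ℝ) * (inner ℝ (x 0) (deriv x 0) : ℝ) := by
    intro t
    have hG : ∀ u : ℝ, HasDerivAt (fun s =>
        (inner ℝ (x s) (x s) : ℝ) * (inner ℝ (deriv x s) (deriv x s) : ℝ)
          - (inner ℝ (x s) (deriv x s) : ℝ) * (inner ℝ (x s) (deriv x s) : ℝ)) 0 u := by
      intro u
      have h := ((hP u).mul (hW u)).sub ((hQ u).mul (hQ u))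
      convert h using 1
      · rfl
      · rfl
      · rfl
      have hns : (inner ℝ (x u) (x u) : ℝ) = ‖x u‖ ^ 2 := real_inner_self_eq_norm_sq _
      rw [hns]
      set r := ‖x u‖ with hrdef
      set q : ℝ := inner ℝ (x u) (deriv x u) with hqdef
      set w : ℝ := inner ℝ (deriv x u) (deriv x u) with hwdef
      have hr : r ≠ 0 := hrne u
      field_simp
      ring
    exact is_const_of_deriv_eq_zero (fun u => (hG u).differentiableAt)
      (fun u => (hG u).deriv) t 0
  intro t
  -- rewrite A₀ in terms of time-t data
  have hA0eq : A₀ = (inner ℝ (deriv x t) (deriv x t) : ℝ) • x t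
      - (inner ℝ (x t) (deriv x t) : ℝ) • deriv x t - (‖x t‖)⁻¹ • x t := by
    ext i
    have := hAcons i t
    rw [hA₀ i, ← real_inner_self_eq_norm_sq, div_eq_mul_inv, ← this]
    simp [mul_comm]
  have hns : (inner ℝ (x t) (x t) : ℝ) = ‖x t‖ ^ 2 := real_inner_self_eq_norm_sq _
  have hinner : (inner ℝ A₀ (x t) : ℝ)
      = (inner ℝ (deriv x t) (deriv x t) : ℝ) * ‖x t‖ ^ 2
        - (inner ℝ (x t) (deriv x t) : ℝ) * (inner ℝ (x t) (deriv x t) : ℝ) - ‖x t‖ := by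
    rw [hA0eq]
    rw [inner_sub_left, inner_sub_left, real_inner_smul_left, real_inner_smul_left,
      real_inner_smul_left, hns, real_inner_comm (deriv x t) (x t)]
    have h5 : (‖x t‖)⁻¹ * ‖x t‖ ^ 2 = ‖x t‖ := by
      rw [sq, ← mul_assoc, inv_mul_cancel₀ (hrne t), one_mul]
    rw [h5]
  rw [real_inner_self_eq_norm_sq (deriv x t)] at hinner
  rw [hinner, hL₀]
  have hcons := hLcons t
  rw [hns, real_inner_self_eq_norm_sq (x 0), real_inner_self_eq_norm_sq (deriv x 0),
    real_inner_self_eq_norm_sq (deriv x t), ← pow_two, ← pow_two] at hcons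
  rw [← hcons]
  ring
end

section
/- Let x : ℝ → ℝ² be any twice differentiable curve with x(t) ≠ 0 for all t, and set N(t) = ẍ(t) + x(t)/|x(t)|³ ∈ ℝ². Define the components of the Laplace–Runge–Lenz vector A₁ = x₁ |ẋ|² − ẋ₁ (x₁ẋ₁ + x₂ẋ₂) − x₁/|x| and A₂ = x₂ |ẋ|² − ẋ₂ (x₁ẋ₁ + x₂ẋ₂) − x₂/|x|. Then dA₁/dt = −x₂ ẋ₂ N₁ + (2 x₁ ẋ₂ − ẋ₁ x₂) N₂ and dA₂/dt = (2 x₂ ẋ₁ − x₁ ẋ₂) N₁ − x₁ ẋ₁ N₂; that is, (−x₂ẋ₂, 2x₁ẋ₂ − ẋ₁x₂) and (2x₂ẋ₁ − x₁ẋ₂, −x₁ẋ₁) are the characteristics of the conservation laws of the two components of the LRL vector for the two-dimensional Kepler problem. -/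
private lemma kepler_aux_arith (a0 a1 b0 b1 c0 c1 r : ℝ) (hr : 0 < r)
    (hr2 : r ^ 2 = a0 ^ 2 + a1 ^ 2) :
    b0 * (b0 ^ 2 + b1 ^ 2) + a0 * (2 * b0 ^ 1 * c0 + 2 * b1 ^ 1 * c1)
      - (c0 * (a0 * b0 + a1 * b1) + b0 * ((b0 * b0 + a0 * c0) + (b1 * b1 + a1 * c1)))
      - (b0 * r - a0 * (1 / (2 * r) * (2 * a0 ^ 1 * b0 + 2 * a1 ^ 1 * b1))) / r ^ 2
    = -a1 * b1 * (c0 + a0 / r ^ 3) + (2 * a0 * b1 - b0 * a1) * (c1 + a1 / r ^ 3) := by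
  have hrne := hr.ne'
  field_simp
  linear_combination (-b0) * hr2

private lemma kepler_aux_deriv (f0 f1 g0 g1 n : ℝ → ℝ) (t c0 c1 : ℝ)
    (hf0 : ∀ s, HasDerivAt f0 (g0 s) s) (hf1 : ∀ s, HasDerivAt f1 (g1 s) s)
    (hg0 : HasDerivAt g0 c0 t) (hg1 : HasDerivAt g1 c1 t)
    (hn : ∀ s, n s = Real.sqrt (f0 s ^ 2 + f1 s ^ 2))
    (hpos : 0 < n t) :
    deriv (fun s => f0 s * (g0 s ^ 2 + g1 s ^ 2)
        - g0 s * (f0 s * g0 s + f1 s * g1 s) - f0 s / n s) t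
      = -(f1 t) * g1 t * (c0 + f0 t / (n t) ^ 3)
        + (2 * f0 t * g1 t - g0 t * f1 t) * (c1 + f1 t / (n t) ^ 3) := by
  set q : ℝ → ℝ := fun s => f0 s ^ 2 + f1 s ^ 2 with hq
  have hqt : 0 < q t := by
    have h := hpos
    rw [hn t] at h
    exact Real.sqrt_pos.mp h
  have hQ : HasDerivAt q (2 * f0 t ^ 1 * g0 t + 2 * f1 t ^ 1 * g1 t) t :=
    ((hf0 t).pow 2).add ((hf1 t).pow 2)
  have hN : HasDerivAt n (1 / (2 * Real.sqrt (q t)) * (2 * f0 t ^ 1 * g0 t + 2 * f1 t ^ 1 * g1 t)) t := by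
    have h := (Real.hasDerivAt_sqrt hqt.ne').comp t hQ
    have : (Real.sqrt ∘ q) = n := by
      funext s; simp [Function.comp, hn s, hq]
    rwa [this] at h
  have hnt : n t = Real.sqrt (q t) := hn t
  have hntne : n t ≠ 0 := hpos.ne'
  have H : HasDerivAt (fun s => f0 s * (g0 s ^ 2 + g1 s ^ 2)
        - g0 s * (f0 s * g0 s + f1 s * g1 s) - f0 s / n s)
      (((g0 t) * (g0 t ^ 2 + g1 t ^ 2) + f0 t * (2 * g0 t ^ 1 * c0 + 2 * g1 t ^ 1 * c1))
        - (c0 * (f0 t * g0 t + f1 t * g1 t)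
            + g0 t * ((g0 t * g0 t + f0 t * c0) + (g1 t * g1 t + f1 t * c1)))
        - (g0 t * n t - f0 t * (1 / (2 * Real.sqrt (q t)) * (2 * f0 t ^ 1 * g0 t + 2 * f1 t ^ 1 * g1 t))) / (n t) ^ 2) t := by
    exact (((hf0 t).mul ((hg0.pow 2).add (hg1.pow 2))).sub
      (hg0.mul (((hf0 t).mul hg0).add ((hf1 t).mul hg1)))).sub
      ((hf0 t).div hN hntne)
  rw [H.deriv]
  have hr2 : (n t) ^ 2 = f0 t ^ 2 + f1 t ^ 2 := by
    rw [hnt, Real.sq_sqrt hqt.le]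
  rw [← hnt]
  have := kepler_aux_arith (f0 t) (f1 t) (g0 t) (g1 t) c0 c1 (n t) hpos hr2
  linarith [this]

/-- **Characteristics of the conservation laws of the Laplace–Runge–Lenz vector for the
two-dimensional Kepler problem.** For any twice differentiable curve `x : ℝ → ℝ²` with
`x(t) ≠ 0`, setting `N(t) = ẍ(t) + x(t)/|x(t)|³` and
`A₁ = x₁|ẋ|² − ẋ₁(x₁ẋ₁ + x₂ẋ₂) − x₁/|x|`, `A₂ = x₂|ẋ|² − ẋ₂(x₁ẋ₁ + x₂ẋ₂) − x₂/|x|`,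
one has `dA₁/dt = −x₂ẋ₂ N₁ + (2x₁ẋ₂ − ẋ₁x₂) N₂` and
`dA₂/dt = (2x₂ẋ₁ − x₁ẋ₂) N₁ − x₁ẋ₁ N₂`. -/
theorem kepler2d_LRL_characteristics (x : ℝ → EuclideanSpace ℝ (Fin 2))
    (hx1 : ∀ t, DifferentiableAt ℝ x t)
    (hx2 : ∀ t, DifferentiableAt ℝ (deriv x) t)
    (hx0 : ∀ t, x t ≠ 0)
    (N : ℝ → EuclideanSpace ℝ (Fin 2))
    (hN : ∀ t, N t = deriv (deriv x) t + (‖x t‖ ^ 3)⁻¹ • x t) :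
    ∀ t : ℝ,
      (deriv (fun s => x s 0 * ((deriv x s 0) ^ 2 + (deriv x s 1) ^ 2)
          - deriv x s 0 * (x s 0 * deriv x s 0 + x s 1 * deriv x s 1)
          - x s 0 / ‖x s‖) t =
        -(x t 1) * deriv x t 1 * N t 0
          + (2 * x t 0 * deriv x t 1 - deriv x t 0 * x t 1) * N t 1) ∧
      (deriv (fun s => x s 1 * ((deriv x s 0) ^ 2 + (deriv x s 1) ^ 2)
          - deriv x s 1 * (x s 0 * deriv x s 0 + x s 1 * deriv x s 1)
          - x s 1 / ‖x s‖) t =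
        (2 * x t 1 * deriv x t 0 - x t 0 * deriv x t 1) * N t 0
          - x t 0 * deriv x t 0 * N t 1) := by
  intro t
  have key : ∀ (s : ℝ) (i : Fin 2), HasDerivAt (fun u => x u i) (deriv x s i) s := by
    intro s i
    have h := (hx1 s).hasDerivAt
    have := (EuclideanSpace.proj (𝕜 := ℝ) i).hasFDerivAt.comp_hasDerivAt s h
    exact this
  have key2 : ∀ (i : Fin 2), HasDerivAt (fun u => deriv x u i) (deriv (deriv x) t i) t := by
    intro i
    have h := (hx2 t).hasDerivAt
    have := (EuclideanSpace.proj (𝕜 := ℝ) i).hasFDerivAt.comp_hasDerivAt t h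
    exact this
  have hnorm : ∀ s : ℝ, ‖x s‖ = Real.sqrt ((x s 0) ^ 2 + (x s 1) ^ 2) := by
    intro s
    rw [EuclideanSpace.norm_eq]
    simp [Fin.sum_univ_two, Real.norm_eq_abs, sq_abs]
  have hpos : 0 < ‖x t‖ := norm_pos_iff.mpr (hx0 t)
  have hNval : ∀ i : Fin 2, N t i = deriv (deriv x) t i + (‖x t‖ ^ 3)⁻¹ * x t i := by
    intro i
    rw [hN t]
    simp [PiLp.add_apply, PiLp.smul_apply, smul_eq_mul]
  constructor
  · have h1 := kepler_aux_deriv (fun u => x u 0) (fun u => x u 1)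
      (fun u => deriv x u 0) (fun u => deriv x u 1) (fun s => ‖x s‖) t
      (deriv (deriv x) t 0) (deriv (deriv x) t 1)
      (fun s => key s 0) (fun s => key s 1) (key2 0) (key2 1) hnorm hpos
    rw [h1, hNval 0, hNval 1]
    field_simp
  · have hsymm : ∀ s : ℝ, ‖x s‖ = Real.sqrt ((x s 1) ^ 2 + (x s 0) ^ 2) := by
      intro s; rw [hnorm s, add_comm]
    have h2 := kepler_aux_deriv (fun u => x u 1) (fun u => x u 0)
      (fun u => deriv x u 1) (fun u => deriv x u 0) (fun s => ‖x s‖) t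
      (deriv (deriv x) t 1) (deriv (deriv x) t 0)
      (fun s => key s 1) (fun s => key s 0) (key2 1) (key2 0) hsymm hpos
    have heq : (fun s => x s 1 * ((deriv x s 0) ^ 2 + (deriv x s 1) ^ 2)
          - deriv x s 1 * (x s 0 * deriv x s 0 + x s 1 * deriv x s 1)
          - x s 1 / ‖x s‖)
        = (fun s => x s 1 * ((deriv x s 1) ^ 2 + (deriv x s 0) ^ 2)
          - deriv x s 1 * (x s 1 * deriv x s 1 + x s 0 * deriv x s 0)
          - x s 1 / ‖x s‖) := by
      funext s; ring
    rw [heq, h2, hNval 0, hNval 1]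
    field_simp
    ring
end

section
/- Let N ≥ 1, h > 0, and let φ^{[1]}, …, φ^{[N]} : ℝᴺ → ℝ be differentiable. For a, b ∈ ℝᴺ and i = 1, …, N write â^i = a + Σ_{j=1}^{i} (b_j − a_j) e_j, where e_j is the j-th standard basis vector, and for a sequence (x_k) in ℝᴺ write x̂_k^i for this point with a = x_k, b = x_{k+1}. Define p_k = (x_{k+1} − x_k)/h + h Σ_{i=2}^{N} (Σ_{j=1}^{i−1} (∂φ^{[j]}/∂x_i)(x̂_k^j)) e_i. Then the sequence (x_k) satisfies the discrete Euler–Lagrange equations of the split discrete Lagrangian 𝕃(a,b) = |b − a|²/(2h²) − Σ_{i=1}^{N} φ^{[i]}(â^i), namely (x¹_{k+1} − 2x¹_k + x¹_{k−1})/h² = −(∂/∂x_1)(Σ_{j=1}^{N} φ^{[j]})(x̂_{k−1}^j) and, for i = 2, …, N, (xⁱ_{k+1} − 2xⁱ_k + xⁱ_{k−1})/h² = −(∂/∂x_i)(Σ_{j=1}^{i−1} φ^{[j]}(x̂_k^j) + Σ_{j=i}^{N} φ^{[j]}(x̂_{k−1}^j)), for all k ≥ 1, if and only if the pairs (x_k,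 p_k) satisfy the composition scheme x_{k+1} = x_k + h p_k − h² Σ_{i=2}^{N} (Σ_{j=1}^{i−1} (∂φ^{[j]}/∂x_i)(x̂_k^j)) e_i and p_{k+1} = p_k − h Σ_{i=1}^{N} ∇φ^{[i]}(x̂_k^i) for all k ≥ 0; i.e., the variational integrator of 𝕃 is equivalent to the composition of the N explicit symplectic maps Φ_{H_i}^h. -/
section aux
variable {N : ℕ}

lemma my_gradient_apply (f : EuclideanSpace ℝ (Fin N) → ℝ) (y : EuclideanSpace ℝ (Fin N))
    (i : Fin N) : gradient f y i = fderiv ℝ f y (EuclideanSpace.single i 1) := by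
  have h1 : fderiv ℝ f y (EuclideanSpace.single i 1)
      = @inner ℝ _ _ (gradient f y) (EuclideanSpace.single i (1:ℝ)) := by
    rw [gradient, InnerProductSpace.toDual_symm_apply]
  rw [h1, EuclideanSpace.inner_single_right]
  simp

lemma my_sum_split (i : Fin N) (f : Fin N → ℝ) :
    ∑ j, f j = (∑ j ∈ Finset.Iio i, f j) + ∑ j ∈ Finset.Ici i, f j := by
  rw [← Finset.sum_union]
  · congr 1
    ext j
    simp [lt_or_ge j i, Finset.mem_union]
  · simp [Finset.disjoint_left]

lemma my_filter_sum_apply (c : Fin N → ℝ) (i : Fin N) (hc : i.val = 0 → c i = 0) :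
    (∑ i' ∈ Finset.univ.filter (fun i' : Fin N => i'.val ≠ 0),
      c i' • EuclideanSpace.single i' (1:ℝ)) i = c i := by
  rw [WithLp.ofLp_sum, Finset.sum_apply]
  simp only [PiLp.smul_apply, EuclideanSpace.single_apply, smul_eq_mul, mul_ite, mul_one, mul_zero]
  rw [Finset.sum_ite_eq]
  by_cases h0 : i.val = 0
  · simp [h0, hc h0]
  · simp [h0]

end aux


/-- **Equivalence of the split variational integrator with the composition of explicit
symplectic maps.** For the split discrete Lagrangian
`𝕃(a,b) = |b−a|²/(2h²) − Σᵢ φ^[i](âⁱ)` with `âⁱ = a + Σ_{j≤i}(b_j − a_j)e_j`, and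
momenta `p_k = (x_{k+1} − x_k)/h + h Σ_{i≥2}(Σ_{j<i} ∂φ^[j]/∂x_i(x̂_k^j)) e_i`, the
sequence `(x_k)` satisfies the discrete Euler–Lagrange equations for all `k ≥ 1`
iff `(x_k, p_k)` satisfies the composition scheme
`x_{k+1} = x_k + h p_k − h² Σ_{i≥2}(Σ_{j<i} ∂φ^[j]/∂x_i(x̂_k^j)) e_i`,
`p_{k+1} = p_k − h Σᵢ ∇φ^[i](x̂_k^i)` for all `k ≥ 0`.
(Indices are zero-based: `i ≥ 2` becomes `i ≠ 0`, `j ≤ i − 1` becomes `j < i`,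
and for `i = 0` the first sum in the Euler–Lagrange equation is empty.) -/
theorem split_variational_integrator_eq_composition (N : ℕ) (hN : 1 ≤ N)
    (h : ℝ) (hh : 0 < h)
    (φ : Fin N → EuclideanSpace ℝ (Fin N) → ℝ)
    (hφ : ∀ i, Differentiable ℝ (φ i))
    (hat : EuclideanSpace ℝ (Fin N) → EuclideanSpace ℝ (Fin N) → Fin N →
      EuclideanSpace ℝ (Fin N))
    (hhat : ∀ a b i, hat a b i =
      a + ∑ j ∈ Finset.Iic i, (b j - a j) • EuclideanSpace.single j 1)
    (x p : ℕ → EuclideanSpace ℝ (Fin N))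
    (hp : ∀ k, p k = h⁻¹ • (x (k + 1) - x k) +
      h • ∑ i ∈ Finset.univ.filter (fun i : Fin N => i.val ≠ 0),
        (∑ j ∈ Finset.Iio i,
          fderiv ℝ (φ j) (hat (x k) (x (k + 1)) j) (EuclideanSpace.single i 1)) •
            EuclideanSpace.single i 1) :
    (∀ k : ℕ, 1 ≤ k → ∀ i : Fin N,
        (x (k + 1) i - 2 * x k i + x (k - 1) i) / h ^ 2 =
          -((∑ j ∈ Finset.Iio i,
              fderiv ℝ (φ j) (hat (x k) (x (k + 1)) j) (EuclideanSpace.single i 1)) +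
            (∑ j ∈ Finset.Ici i,
              fderiv ℝ (φ j) (hat (x (k - 1)) (x k) j) (EuclideanSpace.single i 1)))) ↔
    (∀ k : ℕ,
        x (k + 1) = x k + h • p k - (h ^ 2) •
          ∑ i ∈ Finset.univ.filter (fun i : Fin N => i.val ≠ 0),
            (∑ j ∈ Finset.Iio i,
              fderiv ℝ (φ j) (hat (x k) (x (k + 1)) j) (EuclideanSpace.single i 1)) •
                EuclideanSpace.single i 1 ∧
        p (k + 1) = p k - h • ∑ i, gradient (φ i) (hat (x k) (x (k + 1)) i)) := by
  have hh' : h ≠ 0 := ne_of_gt hh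
  -- the first equation of the scheme always holds
  have hx1 : ∀ k : ℕ, x (k + 1) = x k + h • p k - (h ^ 2) •
      ∑ i ∈ Finset.univ.filter (fun i : Fin N => i.val ≠ 0),
        (∑ j ∈ Finset.Iio i,
          fderiv ℝ (φ j) (hat (x k) (x (k + 1)) j) (EuclideanSpace.single i 1)) •
            EuclideanSpace.single i 1 := by
    intro k
    rw [hp k, smul_add, smul_inv_smul₀ hh', smul_smul, ← pow_two]
    abel
  -- key componentwise equivalence
  have key : ∀ k : ℕ,
      (p (k + 1) = p k - h • ∑ i, gradient (φ i) (hat (x k) (x (k + 1)) i)) ↔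
      (∀ i : Fin N,
        (x (k + 1 + 1) i - 2 * x (k + 1) i + x k i) / h ^ 2 =
          -((∑ j ∈ Finset.Iio i,
              fderiv ℝ (φ j) (hat (x (k + 1)) (x (k + 1 + 1)) j) (EuclideanSpace.single i 1)) +
            (∑ j ∈ Finset.Ici i,
              fderiv ℝ (φ j) (hat (x k) (x (k + 1)) j) (EuclideanSpace.single i 1)))) := by
    intro k
    rw [← (WithLp.ofLp_injective 2).eq_iff, funext_iff]
    apply forall_congr'
    intro i
    have hAc : ∀ m : ℕ, (∑ i' ∈ Finset.univ.filter (fun i' : Fin N => i'.val ≠ 0),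
        (∑ j ∈ Finset.Iio i',
          fderiv ℝ (φ j) (hat (x m) (x (m + 1)) j) (EuclideanSpace.single i' 1)) •
            EuclideanSpace.single i' (1:ℝ)) i
        = ∑ j ∈ Finset.Iio i,
            fderiv ℝ (φ j) (hat (x m) (x (m + 1)) j) (EuclideanSpace.single i 1) := by
      intro m
      refine my_filter_sum_apply _ i ?_
      intro h0
      refine Finset.sum_eq_zero fun j hj => absurd (Finset.mem_Iio.mp hj) ?_
      simp [Fin.lt_def, h0]
    have hG : (∑ i' : Fin N, gradient (φ i') (hat (x k) (x (k + 1)) i')) i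
        = ∑ j : Fin N, fderiv ℝ (φ j) (hat (x k) (x (k + 1)) j) (EuclideanSpace.single i 1) := by
      rw [WithLp.ofLp_sum, Finset.sum_apply]
      exact Finset.sum_congr rfl fun j _ => my_gradient_apply _ _ _
    rw [hp (k + 1), hp k]
    simp only [PiLp.add_apply, PiLp.sub_apply, PiLp.smul_apply, smul_eq_mul, hAc, hG]
    rw [my_sum_split i]
    set a := x (k + 1 + 1) i
    set b := x (k + 1) i
    set cc := x k i
    set C1 := ∑ j ∈ Finset.Iio i,
      fderiv ℝ (φ j) (hat (x (k + 1)) (x (k + 1 + 1)) j) (EuclideanSpace.single i 1) with hC1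
    set C0 := ∑ j ∈ Finset.Iio i,
      fderiv ℝ (φ j) (hat (x k) (x (k + 1)) j) (EuclideanSpace.single i 1) with hC0
    set R := ∑ j ∈ Finset.Ici i,
      fderiv ℝ (φ j) (hat (x k) (x (k + 1)) j) (EuclideanSpace.single i 1) with hR
    have hfact : (h⁻¹ * (a - b) + h * C1) - (h⁻¹ * (b - cc) + h * C0 - h * (C0 + R))
        = h * ((a - 2 * b + cc) / h ^ 2 - (-(C1 + R))) := by
      field_simp
      ring
    rw [← sub_eq_zero, ← sub_eq_zero (a := (a - 2 * b + cc) / h ^ 2), hfact, mul_eq_zero]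
    simp [hh']
  constructor
  · intro H k
    refine ⟨hx1 k, (key k).mpr fun i => ?_⟩
    have := H (k + 1) (by omega) i
    simpa only [Nat.add_sub_cancel] using this
  · intro H k hk i
    obtain ⟨m, rfl⟩ : ∃ m, k = m + 1 := ⟨k - 1, by omega⟩
    simp only [Nat.add_sub_cancel]
    exact (key m).mp (H m).2 i
end

section
/- Let λ > 0 and h > 0 with λ h² < 4. Then the series Σ_{k=1}^∞ (2 ((k−1)!)² / (2k)!) h^{2k−2} λ^k converges and its sum equals ((2/h) · arcsin(√λ h / 2))². Consequently, the modified equation of the discretization (x_{n+1} − 2x_n + x_{n−1})/h² = −λ x_n of the linear oscillator ẍ = −λx has the convergent closed form ẍ = −(Σ_{k=1}^∞ (2((k−1)!)²/(2k)!) h^{2k−2} λ^k) x = −((2/h) arcsin(√λ h/2))² x. -/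
open Real Nat Set

noncomputable def bet (k : ℕ) : ℝ := 2 * (k ! : ℝ)^2 / ((2*k+2)! : ℝ) * 4^k

lemma fact_pos' (n : ℕ) : (0:ℝ) < (n ! : ℝ) := by exact_mod_cast Nat.factorial_pos n

lemma bet_pos (k : ℕ) : 0 < bet k := by unfold bet; positivity

lemma bet_rec (k : ℕ) : ((2*k+4)*(2*k+3)) * bet (k+1) = ((2*(k:ℝ)+2))^2 * bet k := by
  unfold bet
  have h1 : 2*(k+1)+2 = (2*k+2) + 1 + 1 := by ring
  rw [h1, Nat.factorial_succ, Nat.factorial_succ, Nat.factorial_succ]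
  have h2 : ((2*k+2)! : ℝ) ≠ 0 := (fact_pos' _).ne'
  have h3 : ((k)! : ℝ) ≠ 0 := (fact_pos' _).ne'
  push_cast
  field_simp
  ring

lemma bet_le_one (k : ℕ) : bet k ≤ 1 := by
  induction k with
  | zero => unfold bet; norm_num [Nat.factorial]
  | succ n ih =>
    have hr := bet_rec n
    have h2 : ((2*(n:ℝ)+2))^2 ≤ (2*n+4)*(2*n+3) := by nlinarith [Nat.cast_nonneg (α := ℝ) n]
    nlinarith [bet_pos (n+1), bet_pos n]

noncomputable def gg (n : ℕ) (z : ℝ) : ℝ := bet n * z^(2*n+2)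
noncomputable def gg1 (n : ℕ) (z : ℝ) : ℝ := bet n * ((2*(n:ℝ)+2) * z^(2*n+1))
noncomputable def gg2 (n : ℕ) (z : ℝ) : ℝ := bet n * ((2*(n:ℝ)+2) * ((2*(n:ℝ)+1) * z^(2*n)))

lemma hderiv1 (n : ℕ) (y : ℝ) : HasDerivAt (gg n) (gg1 n y) y := by
  have := (hasDerivAt_pow (2*n+2) y).const_mul (bet n)
  rw [show 2*n+2-1 = 2*n+1 from by omega] at this
  unfold gg gg1
  refine this.congr_deriv ?_
  push_cast
  ring

lemma hderiv2 (n : ℕ) (y : ℝ) : HasDerivAt (gg1 n) (gg2 n y) y := by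
  have := (hasDerivAt_pow (2*n+1) y).const_mul (bet n * (2*(n:ℝ)+2))
  rw [show 2*n+1-1 = 2*n from by omega] at this
  unfold gg1 gg2
  have e : (fun z : ℝ => bet n * ((2*(n:ℝ)+2) * z^(2*n+1))) = fun z => bet n * (2*(n:ℝ)+2) * z^(2*n+1) := funext fun z => by ring
  rw [e]
  refine this.congr_deriv ?_
  push_cast; ring

set_option maxHeartbeats 2000000 in
lemma arcsinSq_hasSum (s : ℝ) (hs0 : 0 < s) (hs1 : s < 1) :
    HasSum (fun k : ℕ => bet k * s^(2*k+2)) (Real.arcsin s ^ 2) := by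
  set r : ℝ := (1+s)/2 with hrdef
  have hr0 : 0 < r := by rw [hrdef]; linarith
  have hr1 : r < 1 := by rw [hrdef]; linarith
  have hsr : s < r := by rw [hrdef]; linarith
  have hq1 : r^2 < 1 := by nlinarith
  set u1 : ℕ → ℝ := fun n => 2*r*(((n:ℝ)+1) * (r^2)^n) with hu1def
  set u2 : ℕ → ℝ := fun n => (2*(n:ℝ)+2)*(2*(n:ℝ)+1) * (r^2)^n with hu2def
  have hnr2 : ‖r^2‖ < 1 := by rw [Real.norm_eq_abs, abs_of_pos (by positivity)]; exact hq1
  have hu1 : Summable u1 := by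
    have b1 : Summable (fun n : ℕ => ((n:ℝ)+1) * (r^2)^n) := by
      have h1 := summable_pow_mul_geometric_of_norm_lt_one 1 hnr2 (R := ℝ)
      have h0 : Summable (fun n : ℕ => (r^2)^n) := summable_geometric_of_lt_one (by positivity) hq1
      exact (h1.add h0).congr (fun n => by push_cast; ring)
    exact b1.mul_left _
  have hu2 : Summable u2 := by
    have b2 := summable_pow_mul_geometric_of_norm_lt_one 2 hnr2 (R := ℝ)
    have b1 := summable_pow_mul_geometric_of_norm_lt_one 1 hnr2 (R := ℝ)
    have b0 : Summable (fun n : ℕ => (r^2)^n) := summable_geometric_of_lt_one (by positivity) hq1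
    exact (((b2.mul_left 4).add (b1.mul_left 6)).add (b0.mul_left 2)).congr
      (fun n => by push_cast; ring)
  have habs : ∀ y : ℝ, y ∈ Ioo (-r) r → |y| ≤ r := fun y hy => le_of_lt (abs_lt.2 ⟨hy.1, hy.2⟩)
  have hbound1 : ∀ (n : ℕ) (y : ℝ), y ∈ Ioo (-r) r → ‖gg1 n y‖ ≤ u1 n := by
    intro n y hy
    unfold gg1
    simp only [Real.norm_eq_abs, abs_mul, abs_pow]
    have h1 : |bet n| ≤ 1 := by rw [abs_of_pos (bet_pos n)]; exact bet_le_one n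
    have h2 : |(2*(n:ℝ)+2)| = 2*(n:ℝ)+2 := abs_of_pos (by positivity)
    calc |bet n| * (|2*(n:ℝ)+2| * |y|^(2*n+1)) ≤ 1 * ((2*(n:ℝ)+2) * r^(2*n+1)) := by
          rw [h2]; gcongr <;> first | exact h1 | exact habs y hy | positivity
      _ = u1 n := by rw [hu1def]; rw [pow_succ, pow_mul]; ring
  have hbound2 : ∀ (n : ℕ) (y : ℝ), y ∈ Ioo (-r) r → ‖gg2 n y‖ ≤ u2 n := by
    intro n y hy
    unfold gg2
    simp only [Real.norm_eq_abs, abs_mul, abs_pow]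
    have h1 : |bet n| ≤ 1 := by rw [abs_of_pos (bet_pos n)]; exact bet_le_one n
    have h2 : |(2*(n:ℝ)+2)| = 2*(n:ℝ)+2 := abs_of_pos (by positivity)
    have h3 : |(2*(n:ℝ)+1)| = 2*(n:ℝ)+1 := abs_of_pos (by positivity)
    calc |bet n| * (|2*(n:ℝ)+2| * (|2*(n:ℝ)+1| * |y|^(2*n)))
        ≤ 1 * ((2*(n:ℝ)+2) * ((2*(n:ℝ)+1) * r^(2*n))) := by
          rw [h2, h3]; gcongr <;> first | exact h1 | exact habs y hy | positivity
      _ = u2 n := by rw [hu2def, pow_mul]; ring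
  have h0mem : (0:ℝ) ∈ Ioo (-r) r := ⟨by linarith, hr0⟩
  have hsmem : s ∈ Ioo (-r) r := ⟨by linarith, hsr⟩
  have hsum0 : Summable (fun n : ℕ => gg n 0) := by
    have : (fun n : ℕ => gg n 0) = fun _ => (0:ℝ) := by
      funext n; unfold gg; simp [zero_pow (show 2*n+2 ≠ 0 by omega)]
    rw [this]; exact summable_zero
  have hsum10 : Summable (fun n : ℕ => gg1 n 0) := by
    have : (fun n : ℕ => gg1 n 0) = fun _ => (0:ℝ) := by
      funext n; unfold gg1; simp [zero_pow (show 2*n+1 ≠ 0 by omega)]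
    rw [this]; exact summable_zero
  have hF : ∀ y ∈ Ioo (-r) r,
      HasDerivAt (fun z : ℝ => ∑' n : ℕ, gg n z) (∑' n : ℕ, gg1 n y) y := by
    intro y hy
    exact hasDerivAt_tsum_of_isPreconnected (g := gg) (g' := gg1) hu1 isOpen_Ioo
      (convex_Ioo _ _).isPreconnected (fun n z _ => hderiv1 n z) hbound1 h0mem hsum0 hy
  have hS1 : ∀ y ∈ Ioo (-r) r,
      HasDerivAt (fun z : ℝ => ∑' n : ℕ, gg1 n z) (∑' n : ℕ, gg2 n y) y := by
    intro y hy
    exact hasDerivAt_tsum_of_isPreconnected (g := gg1) (g' := gg2) hu2 isOpen_Ioo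
      (convex_Ioo _ _).isPreconnected (fun n z _ => hderiv2 n z) hbound2 h0mem hsum10 hy
  have hFsummable : ∀ y ∈ Ioo (-r) r, Summable (fun n : ℕ => gg n y) := by
    intro y hy
    exact summable_of_summable_hasDerivAt_of_isPreconnected (g := gg) (g' := gg1) hu1 isOpen_Ioo
      (convex_Ioo _ _).isPreconnected (fun n z _ => hderiv1 n z) hbound1 h0mem hsum0 hy
  have hg1summable : ∀ y ∈ Ioo (-r) r, Summable (fun n : ℕ => gg1 n y) := fun y hy =>
    Summable.of_norm_bounded hu1 (fun n => hbound1 n y hy)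
  have hg2summable : ∀ y ∈ Ioo (-r) r, Summable (fun n : ℕ => gg2 n y) := fun y hy =>
    Summable.of_norm_bounded hu2 (fun n => hbound2 n y hy)
  have hODE : ∀ y ∈ Ioo (-r) r,
      (1 - y^2) * (∑' n : ℕ, gg2 n y) - y * (∑' n : ℕ, gg1 n y) = 2 := by
    intro y hy
    have h2s := hg2summable y hy
    have h1s := hg1summable y hy
    have hshift : Summable (fun n : ℕ => gg2 (n+1) y) := (summable_nat_add_iff 1).2 h2s
    have e1 : (1 - y^2) * (∑' n : ℕ, gg2 n y) = ∑' n : ℕ, (1 - y^2) * gg2 n y :=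
      (tsum_mul_left).symm
    have e2 : y * (∑' n : ℕ, gg1 n y) = ∑' n : ℕ, y * gg1 n y := (tsum_mul_left).symm
    rw [e1, e2, ← Summable.tsum_sub (h2s.mul_left _) (h1s.mul_left _)]
    have term : ∀ n : ℕ, (1 - y^2) * gg2 n y - y * gg1 n y = gg2 n y - gg2 (n+1) y := by
      intro n
      unfold gg1 gg2
      have hrec := bet_rec n
      have hy2 : (y:ℝ)^(2*(n+1)) = y^(2*n) * y^2 := by
        rw [show 2*(n+1) = 2*n+2 from by ring, pow_add]
      have hy1 : (y:ℝ)^(2*n+1) = y^(2*n) * y := by rw [pow_succ]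
      push_cast
      rw [hy2, hy1]
      linear_combination (y^(2*n) * y^2) * hrec
    rw [tsum_congr term, Summable.tsum_sub h2s hshift, Summable.tsum_eq_zero_add h2s]
    have hg20 : gg2 0 y = 2 := by unfold gg2; simp; unfold bet; norm_num [Nat.factorial]
    rw [hg20]; ring
  -- geometry of the interval
  have hysq : ∀ y ∈ Ioo (-r) r, y^2 < 1 := by
    intro y hy
    have h1 := habs y hy
    nlinarith [sq_abs y, abs_nonneg y]
  have hD : ∀ y ∈ Ioo (-r) r, (0:ℝ) < 1 - y^2 := fun y hy => by linarith [hysq y hy]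
  have hsqrtD : ∀ y ∈ Ioo (-r) r, (0:ℝ) < Real.sqrt (1 - y^2) := fun y hy =>
    Real.sqrt_pos.2 (hD y hy)
  have hne1 : ∀ y ∈ Ioo (-r) r, y ≠ -1 := by
    intro y hy h; have h1 := habs y hy; rw [h, abs_neg, abs_one] at h1; linarith
  have hne2 : ∀ y ∈ Ioo (-r) r, y ≠ 1 := by
    intro y hy h; have h1 := habs y hy; rw [h, abs_one] at h1; linarith
  have hsqderiv : ∀ y ∈ Ioo (-r) r,
      HasDerivAt (fun z : ℝ => Real.sqrt (1 - z^2)) (-y / Real.sqrt (1 - y^2)) y := by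
    intro y hy
    have inner : HasDerivAt (fun z : ℝ => 1 - z^2) (-(2*y)) y := by
      have := (hasDerivAt_pow 2 y).const_sub 1
      simpa using this
    have outer := (Real.hasDerivAt_sqrt (hD y hy).ne').comp y inner
    have h2 : HasDerivAt (fun z : ℝ => Real.sqrt (1 - z^2))
        (1/(2*Real.sqrt (1-y^2)) * (-(2*y))) y := by
      simpa [Function.comp_def] using outer
    convert h2 using 1
    have h3 := (hsqrtD y hy).ne'
    field_simp
  -- Psi has zero derivative
  have hPsi : ∀ y ∈ Ioo (-r) r,
      HasDerivAt (fun z : ℝ => Real.sqrt (1 - z^2) * (∑' n : ℕ, gg1 n z) - 2 * Real.arcsin z)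
        0 y := by
    intro y hy
    have hmul := (hsqderiv y hy).mul (hS1 y hy)
    have harc := (Real.hasDerivAt_arcsin (hne1 y hy) (hne2 y hy)).const_mul 2
    have H := hmul.sub harc
    have hval : -y / Real.sqrt (1-y^2) * (∑' n : ℕ, gg1 n y)
        + Real.sqrt (1-y^2) * (∑' n : ℕ, gg2 n y) - 2 * (1 / Real.sqrt (1-y^2)) = 0 := by
      have hs3 := hsqrtD y hy
      have hself : Real.sqrt (1-y^2) * Real.sqrt (1-y^2) = 1 - y^2 :=
        Real.mul_self_sqrt (hD y hy).le
      have key := hODE y hy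
      have hAD : (-y / Real.sqrt (1-y^2) * (∑' n : ℕ, gg1 n y)
          + Real.sqrt (1-y^2) * (∑' n : ℕ, gg2 n y)
          - 2 * (1 / Real.sqrt (1-y^2))) * Real.sqrt (1-y^2) = 0 := by
        have hexp : (-y / Real.sqrt (1-y^2) * (∑' n : ℕ, gg1 n y)
            + Real.sqrt (1-y^2) * (∑' n : ℕ, gg2 n y)
            - 2 * (1 / Real.sqrt (1-y^2))) * Real.sqrt (1-y^2)
            = (Real.sqrt (1-y^2) * Real.sqrt (1-y^2)) * (∑' n : ℕ, gg2 n y)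
              - y * (∑' n : ℕ, gg1 n y) - 2 := by
          field_simp
          ring
        rw [hexp, hself]
        linarith [key]
      rcases mul_eq_zero.1 hAD with h | h
      · exact h
      · exact absurd h hs3.ne'
    rw [← hval]
    exact H
  -- constancy on [0, s]
  have hsubIcc : Icc (0:ℝ) s ⊆ Ioo (-r) r := fun y hy =>
    ⟨by have := hy.1; linarith, lt_of_le_of_lt hy.2 hsr⟩
  have hPsiConst : ∀ y ∈ Icc (0:ℝ) s,
      Real.sqrt (1 - y^2) * (∑' n : ℕ, gg1 n y) - 2 * Real.arcsin y
        = Real.sqrt (1 - 0^2) * (∑' n : ℕ, gg1 n 0) - 2 * Real.arcsin 0 := by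
    have := constant_of_derivWithin_zero (f := fun z : ℝ =>
        Real.sqrt (1 - z^2) * (∑' n : ℕ, gg1 n z) - 2 * Real.arcsin z) (a := 0) (b := s)
      (fun y hy => ((hPsi y (hsubIcc hy)).differentiableAt).differentiableWithinAt)
      (fun y hy => by
        have h1 := hPsi y (hsubIcc (Ico_subset_Icc_self hy))
        exact h1.hasDerivWithinAt.derivWithin (uniqueDiffOn_Icc hs0 y (Ico_subset_Icc_self hy)))
    exact this
  have hS1zero : (∑' n : ℕ, gg1 n 0) = 0 := by
    have : (fun n : ℕ => gg1 n 0) = fun _ => (0:ℝ) := by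
      funext n; unfold gg1; simp [zero_pow (show 2*n+1 ≠ 0 by omega)]
    rw [this, tsum_zero]
  have hPsiZero : ∀ y ∈ Icc (0:ℝ) s,
      Real.sqrt (1 - y^2) * (∑' n : ℕ, gg1 n y) = 2 * Real.arcsin y := by
    intro y hy
    have h1 := hPsiConst y hy
    rw [hS1zero, Real.arcsin_zero] at h1
    simp at h1
    linarith
  -- Phi has zero derivative on [0,s]
  have hPhi : ∀ y ∈ Icc (0:ℝ) s,
      HasDerivAt (fun z : ℝ => (∑' n : ℕ, gg n z) - Real.arcsin z ^ 2) 0 y := by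
    intro y hy
    have hy' := hsubIcc hy
    have harc := (Real.hasDerivAt_arcsin (hne1 y hy') (hne2 y hy')).pow 2
    have H := (hF y hy').sub harc
    have hval : (∑' n : ℕ, gg1 n y) - 2 * Real.arcsin y ^ (2-1) * (1 / Real.sqrt (1-y^2)) = 0 := by
      have hs3 := hsqrtD y hy'
      have h1 := hPsiZero y hy
      have : (∑' n : ℕ, gg1 n y) = 2 * Real.arcsin y / Real.sqrt (1-y^2) := by
        rw [eq_div_iff hs3.ne']
        linarith [h1]
      rw [this]
      simp
      field_simp
      ring
    rw [← hval]
    push_cast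
    exact H
  have hPhiConst := constant_of_derivWithin_zero (f := fun z : ℝ =>
      (∑' n : ℕ, gg n z) - Real.arcsin z ^ 2) (a := 0) (b := s)
    (fun y hy => ((hPhi y hy).differentiableAt).differentiableWithinAt)
    (fun y hy => (hPhi y (Ico_subset_Icc_self hy)).hasDerivWithinAt.derivWithin
      (uniqueDiffOn_Icc hs0 y (Ico_subset_Icc_self hy)))
  have hFzero : (∑' n : ℕ, gg n 0) = 0 := by
    have : (fun n : ℕ => gg n 0) = fun _ => (0:ℝ) := by
      funext n; unfold gg; simp [zero_pow (show 2*n+2 ≠ 0 by omega)]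
    rw [this, tsum_zero]
  have hfinal : (∑' n : ℕ, gg n s) = Real.arcsin s ^ 2 := by
    have h1 := hPhiConst s (right_mem_Icc.2 hs0.le)
    simp only [Real.arcsin_zero] at h1
    simp [hFzero] at h1
    linarith
  have h2 := (hFsummable s hsmem).hasSum
  rw [hfinal] at h2
  exact h2


set_option maxHeartbeats 1000000

/-- **Closed form of the modified equation of the leapfrog discretization of the linear
oscillator.** For `λ > 0`, `h > 0` with `λh² < 4`, the series
`Σ_{k=1}^∞ (2((k−1)!)²/(2k)!) h^{2k−2} λ^k` converges with sum
`((2/h) arcsin(√λ h/2))²` (below the series is indexed by `k ∈ ℕ`, the term shown being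
the one for `k+1`). Consequently the modified equation
`ẍ = −((2/h) arcsin(√λ h/2))² x` is convergent and exact: any solution of it satisfies
the discretization `(x(t+h) − 2x(t) + x(t−h))/h² = −λ x(t)` of `ẍ = −λx`. -/
theorem modified_equation_linear_oscillator (lam h : ℝ) (hlam : 0 < lam) (hh : 0 < h)
    (hlh : lam * h ^ 2 < 4) :
    HasSum
      (fun k : ℕ => 2 * ((Nat.factorial k : ℝ)) ^ 2 / (Nat.factorial (2 * k + 2) : ℝ)
        * h ^ (2 * k) * lam ^ (k + 1))
      (((2 / h) * Real.arcsin (Real.sqrt lam * h / 2)) ^ 2) ∧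
    (∀ x : ℝ → ℝ,
      (∀ t, DifferentiableAt ℝ x t) →
      (∀ t, DifferentiableAt ℝ (deriv x) t) →
      (∀ t, deriv (deriv x) t =
        -(((2 / h) * Real.arcsin (Real.sqrt lam * h / 2)) ^ 2) * x t) →
      ∀ t : ℝ, (x (t + h) - 2 * x t + x (t - h)) / h ^ 2 = -lam * x t) := by

  have h0 : (h:ℝ) ≠ 0 := hh.ne'
  set s : ℝ := Real.sqrt lam * h / 2 with hsdef
  have hsl : 0 < Real.sqrt lam := Real.sqrt_pos.2 hlam
  have hs0 : 0 < s := by rw [hsdef]; positivity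
  have hss : s^2 = lam * h^2 / 4 := by
    rw [hsdef]
    rw [div_pow, mul_pow, Real.sq_sqrt hlam.le]
    norm_num
  have hs1 : s < 1 := by nlinarith
  constructor
  · -- the series
    have key := arcsinSq_hasSum s hs0 hs1
    have hkey2 := key.mul_left (4 / h^2)
    have hfe : (fun k : ℕ => 2 * ((Nat.factorial k : ℝ)) ^ 2 / (Nat.factorial (2 * k + 2) : ℝ)
        * h ^ (2 * k) * lam ^ (k + 1)) = (fun k : ℕ => 4/h^2 * (bet k * s^(2*k+2))) := by
      funext k
      unfold bet
      have hsp : s^(2*k+2) = (lam*h^2/4)^(k+1) := by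
        rw [show 2*k+2 = 2*(k+1) from by ring, pow_mul, hss]
      rw [hsp]
      have hf0 : ((2*k+2).factorial : ℝ) ≠ 0 := (fact_pos' _).ne'
      field_simp
      have h4 : (1/4:ℝ)^k * 4^k = 1 := by rw [← mul_pow]; norm_num
      linear_combination (-(h^2*h^(k*2)*lam*lam^k)) * h4
    have hval : ((2 / h) * Real.arcsin s) ^ 2 = 4/h^2 * Real.arcsin s ^ 2 := by
      field_simp
      ring
    rw [hfe, hval]
    exact hkey2
  · -- the exactness of the modified equation
    intro x hx1 hx2 hode t
    set ω : ℝ := (2/h) * Real.arcsin s with hωdef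
    have hω0 : 0 < ω := by
      have := Real.arcsin_pos.2 hs0
      rw [hωdef]; positivity
    set u : ℝ → ℝ := fun p => x (t+p) + x (t-p) - 2*Real.cos (ω*p)*x t with hu
    set v : ℝ → ℝ := fun p => deriv x (t+p) - deriv x (t-p) + 2*ω*Real.sin (ω*p)*x t with hv
    have hxp : ∀ p : ℝ, HasDerivAt (fun p : ℝ => x (t+p)) (deriv x (t+p)) p := by
      intro p
      have := ((hx1 (t+p)).hasDerivAt).comp p ((hasDerivAt_id p).const_add t)
      simpa [Function.comp_def] using this
    have hxm : ∀ p : ℝ, HasDerivAt (fun p : ℝ => x (t-p)) (-deriv x (t-p)) p := by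
      intro p
      have := ((hx1 (t-p)).hasDerivAt).comp p ((hasDerivAt_id p).const_sub t)
      simpa [Function.comp_def] using this
    have hxp' : ∀ p : ℝ, HasDerivAt (fun p : ℝ => deriv x (t+p)) (deriv (deriv x) (t+p)) p := by
      intro p
      have := ((hx2 (t+p)).hasDerivAt).comp p ((hasDerivAt_id p).const_add t)
      simpa [Function.comp_def] using this
    have hxm' : ∀ p : ℝ, HasDerivAt (fun p : ℝ => deriv x (t-p)) (-deriv (deriv x) (t-p)) p := by
      intro p
      have := ((hx2 (t-p)).hasDerivAt).comp p ((hasDerivAt_id p).const_sub t)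
      simpa [Function.comp_def] using this
    have hcos : ∀ p : ℝ, HasDerivAt (fun p : ℝ => Real.cos (ω*p)) (-Real.sin (ω*p)*ω) p := by
      intro p
      have hin : HasDerivAt (fun p : ℝ => ω*p) ω p := by
        simpa using (hasDerivAt_id p).const_mul ω
      exact hin.cos
    have hsin : ∀ p : ℝ, HasDerivAt (fun p : ℝ => Real.sin (ω*p)) (Real.cos (ω*p)*ω) p := by
      intro p
      have hin : HasDerivAt (fun p : ℝ => ω*p) ω p := by
        simpa using (hasDerivAt_id p).const_mul ω
      exact hin.sin
    have Hu : ∀ p : ℝ, HasDerivAt u (v p) p := by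
      intro p
      have H := ((hxp p).add (hxm p)).sub (((hcos p).const_mul 2).mul_const (x t))
      rw [hu, hv]
      refine H.congr_deriv ?_
      ring
    have Hv : ∀ p : ℝ, HasDerivAt v (-(ω^2) * u p) p := by
      intro p
      have H := ((hxp' p).sub (hxm' p)).add ((((hsin p).const_mul (2*ω))).mul_const (x t))
      rw [hu, hv]
      refine H.congr_deriv ?_
      rw [hode (t+p), hode (t-p)]
      rw [hωdef]
      ring
    have HE : ∀ p : ℝ, HasDerivAt (fun p => v p^2 + ω^2 * u p^2) 0 p := by
      intro p
      have H := ((Hv p).pow 2).add (((Hu p).pow 2).const_mul (ω^2))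
      refine H.congr_deriv ?_
      ring
    have hEconst : v h^2 + ω^2 * u h^2 = v 0^2 + ω^2 * u 0^2 :=
      is_const_of_deriv_eq_zero (fun p => (HE p).differentiableAt)
        (fun p => (HE p).deriv) h 0
    have hu0 : u 0 = 0 := by rw [hu]; simp; ring
    have hv0 : v 0 = 0 := by rw [hv]; simp
    have huh : u h = 0 := by
      have hE0 : v h^2 + ω^2 * u h^2 = 0 := by rw [hEconst, hu0, hv0]; ring
      have h1 : ω^2 * u h^2 = 0 := by nlinarith [sq_nonneg (v h), sq_nonneg (u h), sq_nonneg ω, mul_nonneg (sq_nonneg ω) (sq_nonneg (u h))]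
      have h2 : u h^2 = 0 := by
        rcases mul_eq_zero.1 h1 with h3 | h3
        · exact absurd h3 (pow_ne_zero 2 hω0.ne')
        · exact h3
      exact pow_eq_zero_iff (n := 2) (by norm_num) |>.1 h2
    have hkey : x (t+h) + x (t-h) = 2*Real.cos (ω*h)*x t := by
      rw [hu] at huh
      simp only at huh
      linarith
    have hcosval : Real.cos (ω*h) = 1 - lam * h^2/2 := by
      have hωh : ω*h = 2 * Real.arcsin s := by rw [hωdef]; field_simp
      rw [hωh, Real.cos_two_mul, Real.cos_arcsin]
      rw [Real.sq_sqrt (by nlinarith : (0:ℝ) ≤ 1 - s^2), hss]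
      ring
    rw [hcosval] at hkey
    have hnum : x (t+h) - 2 * x t + x (t-h) = -lam * x t * h^2 := by linear_combination hkey
    rw [hnum]
    field_simp
end

section
/- Let x : ℝ → ℝ² be a twice differentiable curve with x(t) ≠ 0 for all t, and consider the Lagrangian L̄(x, v) = x₁ v₁ / |x|³ on (ℝ² \ {0}) × ℝ². Then the Euler–Lagrange expression of L̄ along x equals (d/dt)[(∂L̄/∂v)(x(t), ẋ(t))] − (∂L̄/∂x)(x(t), ẋ(t)) = (3/|x(t)|⁵) · (−x₁(t) x₂(t) ẋ₂(t), x₁(t) x₂(t) ẋ₁(t)) for all t; i.e., EL(x₁ẋ₁/|x|³) = (3/|x|⁵)[−x₁x₂ẋ₂, x₁x₂ẋ₁]ᵀ. -/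
lemma EL_dirDeriv {g : EuclideanSpace ℝ (Fin 2) → ℝ} {p : EuclideanSpace ℝ (Fin 2)}
    (w : EuclideanSpace ℝ (Fin 2)) (hg : DifferentiableAt ℝ g p) :
    fderiv ℝ g p w = deriv (fun ε : ℝ => g (p + ε • w)) 0 := by
  have hline : HasDerivAt (fun ε : ℝ => p + ε • w) w 0 := by
    simpa using ((hasDerivAt_id (0:ℝ)).smul_const w).const_add p
  have h2 : HasFDerivAt g (fderiv ℝ g p) ((fun ε : ℝ => p + ε • w) 0) := by
    simpa using hg.hasFDerivAt
  have := h2.comp_hasDerivAt (0:ℝ) hline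
  exact this.deriv.symm

lemma EL_normsq (q : EuclideanSpace ℝ (Fin 2)) : ‖q‖ ^ 2 = q 0 ^ 2 + q 1 ^ 2 := by
  rw [EuclideanSpace.norm_eq, Real.sq_sqrt (by positivity)]
  simp [Fin.sum_univ_two, sq_abs]

lemma EL_rpow_eq {r : ℝ} (hr : 0 < r) :
    (r ^ 2 : ℝ) ^ (-(3:ℝ)/2) = (r ^ 3)⁻¹ ∧ (r ^ 2 : ℝ) ^ (-(3:ℝ)/2 - 1) = (r ^ 5)⁻¹ := by
  have h2 : (r ^ 2 : ℝ) = r ^ ((2:ℕ) : ℝ) := (Real.rpow_natCast r 2).symm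
  constructor
  · rw [h2, ← Real.rpow_natCast r 3, ← Real.rpow_neg hr.le, ← Real.rpow_mul hr.le]
    norm_num
  · rw [h2, ← Real.rpow_natCast r 5, ← Real.rpow_neg hr.le, ← Real.rpow_mul hr.le]
    norm_num

lemma EL_fderiv_linear (c : ℝ) (z w : EuclideanSpace ℝ (Fin 2)) :
    fderiv ℝ (fun v : EuclideanSpace ℝ (Fin 2) => c * v 0) z w = c * w 0 := by
  have h2 : HasFDerivAt (fun v : EuclideanSpace ℝ (Fin 2) => c * v 0)
      (c • EuclideanSpace.proj (𝕜 := ℝ) (0 : Fin 2)) z :=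
    (c • EuclideanSpace.proj (𝕜 := ℝ) (0 : Fin 2)).hasFDerivAt
  rw [h2.fderiv]
  simp

/-- **Euler–Lagrange expression of the modified-Lagrangian term `L̄(x,v) = x₁v₁/|x|³`
for the two-dimensional Kepler problem.** Along any twice differentiable curve
`x : ℝ → ℝ²` with `x(t) ≠ 0`,
`EL(x₁ẋ₁/|x|³) = (3/|x|⁵)[−x₁x₂ẋ₂, x₁x₂ẋ₁]ᵀ` componentwise. -/
theorem EL_modified_lagrangian_term (x : ℝ → EuclideanSpace ℝ (Fin 2))
    (hx1 : ∀ t, DifferentiableAt ℝ x t)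
    (hx2 : ∀ t, DifferentiableAt ℝ (deriv x) t)
    (hx0 : ∀ t, x t ≠ 0)
    (L : EuclideanSpace ℝ (Fin 2) → EuclideanSpace ℝ (Fin 2) → ℝ)
    (hL : ∀ q v, L q v = q 0 * v 0 / ‖q‖ ^ 3) :
    ∀ t : ℝ,
      (deriv (fun s => fderiv ℝ (fun v => L (x s) v) (deriv x s)
            (EuclideanSpace.single 0 1)) t
          - fderiv ℝ (fun q => L q (deriv x t)) (x t) (EuclideanSpace.single 0 1)
        = 3 / ‖x t‖ ^ 5 * (-(x t 0 * x t 1 * deriv x t 1))) ∧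
      (deriv (fun s => fderiv ℝ (fun v => L (x s) v) (deriv x s)
            (EuclideanSpace.single 1 1)) t
          - fderiv ℝ (fun q => L q (deriv x t)) (x t) (EuclideanSpace.single 1 1)
        = 3 / ‖x t‖ ^ 5 * (x t 0 * x t 1 * deriv x t 0)) := by
  intro t
  -- coordinate curves
  have hXa : ∀ s, HasDerivAt (fun s' => x s' 0) (deriv x s 0) s := fun s =>
    (EuclideanSpace.proj (𝕜 := ℝ) (0 : Fin 2)).hasFDerivAt.comp_hasDerivAt s
      (hx1 s).hasDerivAt
  have hXb : ∀ s, HasDerivAt (fun s' => x s' 1) (deriv x s 1) s := fun s =>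
    (EuclideanSpace.proj (𝕜 := ℝ) (1 : Fin 2)).hasFDerivAt.comp_hasDerivAt s
      (hx1 s).hasDerivAt
  have hr : 0 < ‖x t‖ := norm_pos_iff.mpr (hx0 t)
  have hrne : (‖x t‖ : ℝ) ≠ 0 := hr.ne'
  have hu0 : (x t 0) ^ 2 + (x t 1) ^ 2 ≠ 0 := by
    rw [← EL_normsq]; positivity
  -- Step A : the fderiv in v
  have hA : ∀ (i : Fin 2) (s : ℝ),
      fderiv ℝ (fun v => L (x s) v) (deriv x s) (EuclideanSpace.single i 1)
        = (x s 0 / ‖x s‖ ^ 3) *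
            (EuclideanSpace.single i (1:ℝ) : EuclideanSpace ℝ (Fin 2)) 0 := by
    intro i s
    have hfun : (fun v => L (x s) v)
        = fun v : EuclideanSpace ℝ (Fin 2) => (x s 0 / ‖x s‖ ^ 3) * v 0 := by
      funext v; rw [hL]; ring
    rw [hfun, EL_fderiv_linear]
  -- rewrite the function under the time `deriv`, component 0
  have hf0 : (fun s => fderiv ℝ (fun v => L (x s) v) (deriv x s)
        (EuclideanSpace.single 0 1))
      = fun s => x s 0 * ((x s 0) ^ 2 + (x s 1) ^ 2) ^ (-(3:ℝ)/2) := by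
    funext s
    have hrs : 0 < ‖x s‖ := norm_pos_iff.mpr (hx0 s)
    have h1 := (EL_rpow_eq hrs).1
    rw [EL_normsq] at h1
    rw [hA 0 s, h1]
    simp [EuclideanSpace.single_apply, div_eq_mul_inv]
  have hf1 : (fun s => fderiv ℝ (fun v => L (x s) v) (deriv x s)
        (EuclideanSpace.single 1 1)) = fun _ : ℝ => (0:ℝ) := by
    funext s
    rw [hA 1 s]
    simp [EuclideanSpace.single_apply]
  -- derivative of the component-0 momentum
  have hu : HasDerivAt (fun s => (x s 0) ^ 2 + (x s 1) ^ 2)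
      (2 * x t 0 * deriv x t 0 + 2 * x t 1 * deriv x t 1) t := by
    have := ((hXa t).fun_pow 2).add ((hXb t).fun_pow 2)
    refine this.congr_deriv ?_
    ring
  have hrp : HasDerivAt (fun s => ((x s 0) ^ 2 + (x s 1) ^ 2) ^ (-(3:ℝ)/2))
      ((-(3:ℝ)/2) * ((x t 0) ^ 2 + (x t 1) ^ 2) ^ (-(3:ℝ)/2 - 1)
        * (2 * x t 0 * deriv x t 0 + 2 * x t 1 * deriv x t 1)) t := by
    have := hu.rpow_const (p := -(3:ℝ)/2) (Or.inl hu0)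
    convert this using 1
    ring
  have hB := (hXa t).fun_mul hrp
  -- Step C : the fderiv in q
  have hgfun : (fun q : EuclideanSpace ℝ (Fin 2) => L q (deriv x t))
      = fun q => deriv x t 0 * (q 0 * ((q 0) ^ 2 + (q 1) ^ 2) ^ (-(3:ℝ)/2)) := by
    funext q
    rw [hL]
    by_cases hq : q = 0
    · subst hq; simp
    · have hrq : 0 < ‖q‖ := norm_pos_iff.mpr hq
      have h1 := (EL_rpow_eq hrq).1
      rw [EL_normsq] at h1
      rw [h1, div_eq_mul_inv]; ring
  have hd0 : DifferentiableAt ℝ (fun q : EuclideanSpace ℝ (Fin 2) => q 0) (x t) :=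
    (EuclideanSpace.proj (𝕜 := ℝ) (0 : Fin 2)).differentiableAt
  have hd1 : DifferentiableAt ℝ (fun q : EuclideanSpace ℝ (Fin 2) => q 1) (x t) :=
    (EuclideanSpace.proj (𝕜 := ℝ) (1 : Fin 2)).differentiableAt
  have hgdiff : DifferentiableAt ℝ
      (fun q : EuclideanSpace ℝ (Fin 2) =>
        deriv x t 0 * (q 0 * ((q 0) ^ 2 + (q 1) ^ 2) ^ (-(3:ℝ)/2))) (x t) :=
    ((hd0.mul (((hd0.pow 2).add (hd1.pow 2)).rpow_const (Or.inl hu0))).const_mul _)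
  -- directional derivatives in q
  have hC0 : fderiv ℝ (fun q => L q (deriv x t)) (x t) (EuclideanSpace.single 0 1)
      = deriv (fun ε : ℝ => deriv x t 0 *
          ((x t 0 + ε) * ((x t 0 + ε) ^ 2 + (x t 1) ^ 2) ^ (-(3:ℝ)/2))) 0 := by
    rw [hgfun, EL_dirDeriv _ hgdiff]
    congr 1
    funext ε
    simp [PiLp.add_apply, PiLp.smul_apply, EuclideanSpace.single_apply]
  have hC1 : fderiv ℝ (fun q => L q (deriv x t)) (x t) (EuclideanSpace.single 1 1)
      = deriv (fun ε : ℝ => deriv x t 0 *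
          (x t 0 * ((x t 0) ^ 2 + (x t 1 + ε) ^ 2) ^ (-(3:ℝ)/2))) 0 := by
    rw [hgfun, EL_dirDeriv _ hgdiff]
    congr 1
    funext ε
    simp [PiLp.add_apply, PiLp.smul_apply, EuclideanSpace.single_apply]
  -- compute those two 1-d derivatives
  have hcurve0 : HasDerivAt (fun ε : ℝ => x t 0 + ε) 1 0 := by
    simpa using (hasDerivAt_id (0:ℝ)).const_add (x t 0)
  have hu0' : HasDerivAt (fun ε : ℝ => (x t 0 + ε) ^ 2 + (x t 1) ^ 2)
      (2 * x t 0) 0 := by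
    have := (hcurve0.fun_pow 2).add_const ((x t 1) ^ 2)
    refine this.congr_deriv ?_
    norm_num
  have hD0 : HasDerivAt (fun ε : ℝ => deriv x t 0 *
      ((x t 0 + ε) * ((x t 0 + ε) ^ 2 + (x t 1) ^ 2) ^ (-(3:ℝ)/2)))
      (deriv x t 0 * (1 * ((x t 0) ^ 2 + (x t 1) ^ 2) ^ (-(3:ℝ)/2)
        + x t 0 * ((-(3:ℝ)/2) * ((x t 0) ^ 2 + (x t 1) ^ 2) ^ (-(3:ℝ)/2 - 1)
            * (2 * x t 0)))) 0 := by
    have h := (hcurve0.fun_mul ((hu0'.rpow_const (p := -(3:ℝ)/2) (Or.inl (by simpa using hu0))))).const_mul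
      (deriv x t 0)
    refine h.congr_deriv ?_ <;> simp only [add_zero] <;> ring
  have hu1' : HasDerivAt (fun ε : ℝ => (x t 0) ^ 2 + (x t 1 + ε) ^ 2)
      (2 * x t 1) 0 := by
    have hc : HasDerivAt (fun ε : ℝ => x t 1 + ε) 1 0 := by
      simpa using (hasDerivAt_id (0:ℝ)).const_add (x t 1)
    have := (hc.fun_pow 2).const_add ((x t 0) ^ 2)
    refine this.congr_deriv ?_
    norm_num
  have hD1 : HasDerivAt (fun ε : ℝ => deriv x t 0 *
      (x t 0 * ((x t 0) ^ 2 + (x t 1 + ε) ^ 2) ^ (-(3:ℝ)/2)))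
      (deriv x t 0 * (x t 0 * ((-(3:ℝ)/2) * ((x t 0) ^ 2 + (x t 1) ^ 2) ^ (-(3:ℝ)/2 - 1)
            * (2 * x t 1)))) 0 := by
    have h := (((hu1'.rpow_const (p := -(3:ℝ)/2) (Or.inl (by simpa using hu0)))).const_mul
      (x t 0)).const_mul (deriv x t 0)
    refine h.congr_deriv ?_ <;> simp only [add_zero] <;> ring
  -- abbreviations for the final arithmetic
  have hnorm3 : ((x t 0) ^ 2 + (x t 1) ^ 2) ^ (-(3:ℝ)/2) = (‖x t‖ ^ 3)⁻¹ := by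
    rw [← EL_normsq]; exact (EL_rpow_eq hr).1
  have hnorm5 : ((x t 0) ^ 2 + (x t 1) ^ 2) ^ (-(3:ℝ)/2 - 1) = (‖x t‖ ^ 5)⁻¹ := by
    rw [← EL_normsq]; exact (EL_rpow_eq hr).2
  have hsq : (x t 0) ^ 2 + (x t 1) ^ 2 = ‖x t‖ ^ 2 := (EL_normsq (x t)).symm
  constructor
  · rw [hf0, hB.deriv, hC0, hD0.deriv, hnorm3, hnorm5]
    field_simp
    ring
  · rw [hf1, hC1, hD1.deriv, hnorm5]
    simp only [deriv_const']
    field_simp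
    ring
end
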